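/- Let (X,μ) and (Y,ν) be σ-finite measure spaces and let T be a linear operator defined on simple functions of X taking values in measurable functions on Y. If ‖Tf‖_{L^∞(Y,ν)} ≤ C‖f‖_{L^∞(X,μ)} and ‖Tf‖_{L¹(Y,ν)} ≤ C‖f‖_{L¹(X,μ)} for all simple f, then for every 1 ≤ p ≤ ∞, ‖Tf‖_{L^p(Y,ν)} ≤ C‖f‖_{L^p(X,μ)} for all simple f (and hence T extends boundedly to L^p with norm at most C). -/

import Mathlib

open MeasureTheory
open scoped ENNReal

section RieszThorinAux
open Set

private lemma PI (q : ℝ) (hq : 1 < q) (x : ℝ) (hx : 0 ≤ x) :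
    ∫⁻ l in Set.Ioi (0:ℝ), ENNReal.ofReal (q*(q-1)*l^(q-2)) * ENNReal.ofReal (x - l)
      = ENNReal.ofReal x ^ q := by
  rcases hx.eq_or_lt with h0 | hx
  · rw [← h0]
    rw [setLIntegral_congr_fun measurableSet_Ioi
      (fun l hl => ?_) (g := fun _ => 0)]
    · simp [ENNReal.zero_rpow_of_pos (by linarith : (0:ℝ) < q)]
    · have : (0:ℝ) - l ≤ 0 := by simp at hl ⊢; linarith
      rw [ENNReal.ofReal_eq_zero.2 this, mul_zero]
  · have hqq : (0:ℝ) < q - 1 := by linarith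
    rw [← Set.Ioc_union_Ioi_eq_Ioi hx.le, lintegral_union measurableSet_Ioi
      (Set.Ioc_disjoint_Ioi le_rfl)]
    have h2 : ∫⁻ l in Set.Ioi x, ENNReal.ofReal (q*(q-1)*l^(q-2)) * ENNReal.ofReal (x - l) = 0 := by
      rw [setLIntegral_congr_fun measurableSet_Ioi
        (fun l hl => ?_) (g := fun _ => 0)]
      · simp
      · have hlx : x < l := hl
        simp [ENNReal.ofReal_eq_zero.2 (by linarith : x - l ≤ 0)]
    rw [h2, add_zero]
    -- main part on Ioc 0 x
    have h3 : ∀ l ∈ Set.Ioc (0:ℝ) x,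
        ENNReal.ofReal (q*(q-1)*l^(q-2)) * ENNReal.ofReal (x - l)
          = ENNReal.ofReal (q*(q-1)*l^(q-2) * (x - l)) := fun l hl => by
      have hl0 : 0 < l := hl.1
      rw [← ENNReal.ofReal_mul (by positivity)]
    rw [setLIntegral_congr_fun measurableSet_Ioc h3]
    have hr2 : (-1:ℝ) < q - 2 := by linarith
    have hr1 : (-1:ℝ) < q - 1 := by linarith
    have hi2 : IntegrableOn (fun l : ℝ => l ^ (q-2)) (Set.Ioc 0 x) volume :=
      (intervalIntegrable_iff_integrableOn_Ioc_of_le hx.le).1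
        (intervalIntegral.intervalIntegrable_rpow' hr2)
    have hi1 : IntegrableOn (fun l : ℝ => l ^ (q-1)) (Set.Ioc 0 x) volume :=
      (intervalIntegrable_iff_integrableOn_Ioc_of_le hx.le).1
        (intervalIntegral.intervalIntegrable_rpow' hr1)
    have heq : Set.EqOn (fun l : ℝ => q*(q-1)*l^(q-2) * (x - l))
        (fun l : ℝ => (q*(q-1)*x)*l^(q-2) - (q*(q-1))*l^(q-1)) (Set.Ioc 0 x) := by
      intro l hl
      have hl0 : (0:ℝ) < l := hl.1
      have h19 : l^(q-1) = l^(q-2) * l := by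
        rw [show q-1 = (q-2)+1 by ring, Real.rpow_add_one hl0.ne']
      simp only [h19]; ring
    have hgint : IntegrableOn (fun l : ℝ => q*(q-1)*l^(q-2) * (x - l)) (Set.Ioc 0 x) volume := by
      rw [integrableOn_congr_fun heq measurableSet_Ioc]
      exact (hi2.const_mul _).sub (hi1.const_mul _)
    rw [← ofReal_integral_eq_lintegral_ofReal hgint
      ((ae_restrict_iff' measurableSet_Ioc).2 (Filter.Eventually.of_forall (fun l hl => by
        have hl0 : (0:ℝ) < l := hl.1
        have hlx : l ≤ x := hl.2
        apply mul_nonneg (mul_nonneg (by nlinarith) (Real.rpow_nonneg hl0.le _)) (by linarith))))]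
    rw [setIntegral_congr_fun measurableSet_Ioc heq]
    rw [integral_sub (hi2.const_mul _) (hi1.const_mul _), MeasureTheory.integral_const_mul, MeasureTheory.integral_const_mul,
      ← intervalIntegral.integral_of_le hx.le, ← intervalIntegral.integral_of_le hx.le,
      integral_rpow (Or.inl hr2), integral_rpow (Or.inl hr1)]
    have h0a : (0:ℝ) ^ (q-2+1) = 0 := Real.zero_rpow (by linarith)
    have h0b : (0:ℝ) ^ (q-1+1) = 0 := Real.zero_rpow (by linarith)
    have hxq : x ^ (q-1) * x = x ^ q := by
      rw [← Real.rpow_add_one hx.ne' (q-1)]; ring_nf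
    rw [h0a, h0b, ENNReal.ofReal_rpow_of_pos hx]
    congr 1
    have e1 : q - 2 + 1 = q - 1 := by ring
    have e2 : q - 1 + 1 = q := by ring
    rw [e1, e2, sub_zero, sub_zero]
    have hxq' : x * x^(q-1) = x^q := by rw [mul_comm]; exact hxq
    have d1 : q*(q-1)*x*(x^(q-1)/(q-1)) = q*(x*x^(q-1)) := by
      field_simp
    have d2 : q*(q-1)*(x^q/q) = (q-1)*x^q := by
      field_simp
    rw [d1, d2, hxq']; ring

private lemma LC {Z : Type*} [MeasurableSpace Z] (m : Measure Z) [SigmaFinite m] (q : ℝ) (hq : 1 < q)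
    (w : Z → ℝ) (hw : Measurable w) (h0 : ∀ z, 0 ≤ w z) :
    ∫⁻ l in Set.Ioi (0:ℝ),
        ENNReal.ofReal (q*(q-1)*l^(q-2)) * ∫⁻ z, ENNReal.ofReal (w z - l) ∂m ∂volume
      = ∫⁻ z, ENNReal.ofReal (w z) ^ q ∂m := by
  have hmeas : Measurable (Function.uncurry fun (l:ℝ) (z:Z) =>
      ENNReal.ofReal (q*(q-1)*l^(q-2)) * ENNReal.ofReal (w z - l)) := by
    change Measurable ((fun p : ℝ × Z => ENNReal.ofReal (q*(q-1)*p.1^(q-2))) *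
      (fun p : ℝ × Z => ENNReal.ofReal (w p.2 - p.1)))
    apply Measurable.mul
    · have : Measurable fun p : ℝ × Z => p.1 ^ (q-2) := measurable_fst.pow measurable_const
      exact (measurable_const.mul this).ennreal_ofReal
    · exact ((hw.comp measurable_snd).sub measurable_fst).ennreal_ofReal
  calc ∫⁻ l in Set.Ioi (0:ℝ),
        ENNReal.ofReal (q*(q-1)*l^(q-2)) * ∫⁻ z, ENNReal.ofReal (w z - l) ∂m ∂volume
      = ∫⁻ l in Set.Ioi (0:ℝ), ∫⁻ z,
          ENNReal.ofReal (q*(q-1)*l^(q-2)) * ENNReal.ofReal (w z - l) ∂m ∂volume :=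
        lintegral_congr fun l => (lintegral_const_mul _ ((hw.sub measurable_const).ennreal_ofReal)).symm
    _ = ∫⁻ z, ∫⁻ l in Set.Ioi (0:ℝ),
          ENNReal.ofReal (q*(q-1)*l^(q-2)) * ENNReal.ofReal (w z - l) ∂volume ∂m :=
        lintegral_lintegral_swap hmeas.aemeasurable
    _ = ∫⁻ z, ENNReal.ofReal (w z) ^ q ∂m := lintegral_congr fun z => PI q hq (w z) (h0 z)

private lemma clamp_abs_le {s t : ℝ} (hs : 0 ≤ s) : |max (-s) (min t s)| ≤ s := by
  rw [abs_le]
  constructor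
  · exact le_max_left _ _
  · exact max_le (by linarith) (min_le_right _ _)

private lemma clamp_zero {s : ℝ} (hs : 0 ≤ s) : max (-s) (min 0 s) = 0 := by
  rw [min_eq_left hs, max_eq_right (by linarith)]

private lemma abs_sub_clamp {s t : ℝ} (hs : 0 ≤ s) :
    |t - max (-s) (min t s)| = max (|t| - s) 0 := by
  rcases le_total t (-s) with h | h
  · rw [min_eq_left (by linarith), max_eq_left h, abs_of_nonpos (by linarith),
      abs_of_nonpos (by linarith), max_eq_left (by linarith)]
    ring
  · rcases le_total t s with h2 | h2
    · rw [min_eq_left h2, max_eq_right h, sub_self, abs_zero,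
        max_eq_right (by cases abs_cases t with | inl h3 => linarith [h3.1] | inr h3 => linarith [h3.1])]
    · rw [min_eq_right h2, max_eq_right (by linarith), abs_of_nonneg (by linarith),
        abs_of_nonneg (by linarith), max_eq_left (by linarith)]

end RieszThorinAux

section
open Set

/-- Riesz–Thorin interpolation at the endpoints `(1,1)` and `(∞,∞)` with a common
constant: if a linear operator `T`, defined on finitely simple functions on `X` with
values in measurable functions on `Y`, satisfies `‖Tf‖_{L^∞} ≤ C‖f‖_{L^∞}` and
`‖Tf‖_{L¹} ≤ C‖f‖_{L¹}`, then `‖Tf‖_{L^p} ≤ C‖f‖_{L^p}` for every `1 ≤ p ≤ ∞`. -/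
theorem riesz_thorin_equal_endpoints {X Y : Type*} [MeasurableSpace X] [MeasurableSpace Y]
    (μ : Measure X) (ν : Measure Y) [SigmaFinite μ] [SigmaFinite ν]
    (T : SimpleFunc X ℝ → (Y → ℝ))
    (hTadd : ∀ f g : SimpleFunc X ℝ, T (f + g) = T f + T g)
    (hTsmul : ∀ (c : ℝ) (f : SimpleFunc X ℝ), T (c • f) = c • T f)
    (C : ℝ≥0∞)
    (hTtop : ∀ f : SimpleFunc X ℝ, f.FinMeasSupp μ →
      eLpNorm (T f) ∞ ν ≤ C * eLpNorm f ∞ μ)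
    (hT1 : ∀ f : SimpleFunc X ℝ, f.FinMeasSupp μ →
      eLpNorm (T f) 1 ν ≤ C * eLpNorm f 1 μ)
    (p : ℝ≥0∞) (hp : 1 ≤ p) :
    ∀ f : SimpleFunc X ℝ, f.FinMeasSupp μ →
      eLpNorm (T f) p ν ≤ C * eLpNorm f p μ := by
  intro f hf
  by_cases hptop : p = ∞
  · subst hptop; exact hTtop f hf
  by_cases hp1 : p = 1
  · subst hp1; exact hT1 f hf
  have hplt : 1 < p := lt_of_le_of_ne hp (Ne.symm hp1)
  have hq : 1 < p.toReal := by
    have h1 : (1:ℝ≥0∞).toReal < p.toReal :=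
      (ENNReal.toReal_lt_toReal ENNReal.one_ne_top hptop).2 hplt
    simpa using h1
  set q : ℝ := p.toReal with hqdef
  have hq0 : (0:ℝ) < q := by linarith
  -- key estimate for measurable minorants of |T f|
  have key : ∀ ψ : Y → ℝ, Measurable ψ → (∀ y, 0 ≤ ψ y) → (∀ y, ψ y ≤ |T f y|) →
      ∫⁻ y, ENNReal.ofReal (ψ y) ^ q ∂ν ≤ C ^ q * ∫⁻ x, (‖f x‖₊ : ℝ≥0∞) ^ q ∂μ := by
    intro ψ hψm hψ0 hψle
    -- tail : if ∫⁻ ‖T f‖₊ = 0 then LHS = 0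
    have tail : ∫⁻ y, (‖T f y‖₊ : ℝ≥0∞) ∂ν = 0 →
        ∫⁻ y, ENNReal.ofReal (ψ y) ^ q ∂ν = 0 := by
      intro h0
      have hle : ∫⁻ y, ENNReal.ofReal (ψ y) ∂ν ≤ ∫⁻ y, (‖T f y‖₊ : ℝ≥0∞) ∂ν := by
        refine lintegral_mono fun y => ?_
        rw [← enorm_eq_nnnorm, ← ofReal_norm, Real.norm_eq_abs]
        exact ENNReal.ofReal_le_ofReal (hψle y)
      have hz : (fun y => ENNReal.ofReal (ψ y)) =ᵐ[ν] 0 :=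
        (lintegral_eq_zero_iff hψm.ennreal_ofReal).1 (le_antisymm (h0 ▸ hle) zero_le)
      have hz2 : (fun y => ENNReal.ofReal (ψ y) ^ q) =ᵐ[ν] 0 := by
        filter_upwards [hz] with y hy
        simp only [Pi.zero_apply] at hy ⊢
        rw [hy, ENNReal.zero_rpow_of_pos hq0]
      rw [lintegral_congr_ae hz2]
      simp
    by_cases hC0 : C = 0
    · have h0 : ∫⁻ y, (‖T f y‖₊ : ℝ≥0∞) ∂ν = 0 := by
        have := hT1 f hf
        rw [hC0, zero_mul, eLpNorm_one_eq_lintegral_enorm] at this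
        exact le_antisymm this zero_le
      rw [tail h0]; exact zero_le
    by_cases hCtop : C = ∞
    · by_cases hf0 : ∫⁻ x, (‖f x‖₊ : ℝ≥0∞) ^ q ∂μ = 0
      · have hfm : Measurable fun x => (‖f x‖₊ : ℝ≥0∞) ^ q :=
          (f.measurable.nnnorm.coe_nnreal_ennreal).pow measurable_const
        have hfz : f =ᵐ[μ] 0 := by
          filter_upwards [(lintegral_eq_zero_iff hfm).1 hf0] with x hx
          simp only [Pi.zero_apply] at hx ⊢
          rcases ENNReal.rpow_eq_zero_iff.1 hx with ⟨h1, _⟩ | ⟨h1, _⟩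
          · simpa using h1
          · exact absurd h1 (by simp)
        have h1 : eLpNorm f 1 μ = 0 := by
          rw [eLpNorm_congr_ae hfz, eLpNorm_zero]
        have h0 : ∫⁻ y, (‖T f y‖₊ : ℝ≥0∞) ∂ν = 0 := by
          have := hT1 f hf
          rw [h1, mul_zero, eLpNorm_one_eq_lintegral_enorm] at this
          exact le_antisymm this zero_le
        rw [tail h0]; exact zero_le
      · rw [hCtop, ENNReal.top_rpow_of_pos hq0, ENNReal.top_mul hf0]
        exact le_top
    -- main case
    set c : ℝ := C.toReal with hcdef
    have hc0 : 0 < c := ENNReal.toReal_pos hC0 hCtop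
    have hCc : C = ENNReal.ofReal c := (ENNReal.ofReal_toReal hCtop).symm
    have claim : ∀ l ∈ Set.Ioi (0:ℝ),
        ∫⁻ y, ENNReal.ofReal (ψ y - l) ∂ν ≤ ∫⁻ x, ENNReal.ofReal (c * |f x| - l) ∂μ := by
      intro l hl
      have hl0 : (0:ℝ) < l := hl
      set s : ℝ := l / c with hsdef
      have hs0 : 0 < s := div_pos hl0 hc0
      set g : SimpleFunc X ℝ := f.map (fun t => max (-s) (min t s)) with hgdef
      set h : SimpleFunc X ℝ := f.map (fun t => t - max (-s) (min t s)) with hhdef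
      have hgh : g + h = f := by
        ext x
        simp only [SimpleFunc.coe_add, Pi.add_apply, hgdef, hhdef, SimpleFunc.map_apply]
        ring
      have hTf : T f = T g + T h := by rw [← hgh, hTadd]
      have hgfin : g.FinMeasSupp μ := hf.map (clamp_zero hs0.le)
      have hhfin : h.FinMeasSupp μ := hf.map (by rw [clamp_zero hs0.le]; ring)
      have hTg : eLpNorm (T g) ∞ ν ≤ ENNReal.ofReal l := by
        refine le_trans (hTtop g hgfin) ?_
        have hb : eLpNorm g ∞ μ ≤ ENNReal.ofReal s := by
          rw [eLpNorm_exponent_top]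
          refine eLpNormEssSup_le_of_ae_bound (C := s) (Filter.Eventually.of_forall fun x => ?_)
          rw [Real.norm_eq_abs, hgdef, SimpleFunc.map_apply]
          exact clamp_abs_le hs0.le
        calc C * eLpNorm g ∞ μ ≤ C * ENNReal.ofReal s := mul_le_mul_right hb C
          _ = ENNReal.ofReal l := by
            rw [hCc, ← ENNReal.ofReal_mul hc0.le]
            congr 1
            rw [hsdef]; field_simp
      have hae : ∀ᵐ y ∂ν, (‖T g y‖₊ : ℝ≥0∞) ≤ ENNReal.ofReal l := by
        filter_upwards [enorm_ae_le_eLpNormEssSup (T g) ν] with y hy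
        exact hy.trans (by rw [eLpNorm_exponent_top] at hTg; exact hTg)
      have hptw : ∀ᵐ y ∂ν, ENNReal.ofReal (ψ y - l) ≤ (‖T h y‖₊ : ℝ≥0∞) := by
        filter_upwards [hae] with y hy
        have hgy : |T g y| ≤ l := by
          rw [← enorm_eq_nnnorm, ← ofReal_norm, Real.norm_eq_abs] at hy
          exact (ENNReal.ofReal_le_ofReal_iff hl0.le).1 hy
        have : ψ y - l ≤ |T h y| := by
          have h1 : |T f y| ≤ |T g y| + |T h y| := by
            rw [hTf]; exact abs_add_le _ _
          have := hψle y
          linarith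
        rw [← enorm_eq_nnnorm, ← ofReal_norm, Real.norm_eq_abs]
        exact ENNReal.ofReal_le_ofReal this
      calc ∫⁻ y, ENNReal.ofReal (ψ y - l) ∂ν ≤ ∫⁻ y, (‖T h y‖₊ : ℝ≥0∞) ∂ν :=
            lintegral_mono_ae hptw
        _ = eLpNorm (T h) 1 ν := by rw [eLpNorm_one_eq_lintegral_enorm]; rfl
        _ ≤ C * eLpNorm h 1 μ := hT1 h hhfin
        _ = ∫⁻ x, C * (‖h x‖₊ : ℝ≥0∞) ∂μ := by
            rw [eLpNorm_one_eq_lintegral_enorm,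
              lintegral_const_mul C h.measurable.nnnorm.coe_nnreal_ennreal]; rfl
        _ = ∫⁻ x, ENNReal.ofReal (c * |f x| - l) ∂μ := by
            refine lintegral_congr fun x => ?_
            rw [← enorm_eq_nnnorm, ← ofReal_norm, Real.norm_eq_abs, hCc,
              ← ENNReal.ofReal_mul hc0.le, hhdef, SimpleFunc.map_apply,
              abs_sub_clamp hs0.le]
            have hcs : c * (|f x| - s) = c * |f x| - l := by
              field_simp [hsdef]
              rw [hsdef]; field_simp
            rw [mul_max_of_nonneg _ _ hc0.le, mul_zero, hcs]
            rcases le_total (c * |f x| - l) 0 with h2 | h2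
            · rw [max_eq_right h2, ENNReal.ofReal_zero, eq_comm, ENNReal.ofReal_eq_zero]
              exact h2
            · rw [max_eq_left h2]
    calc ∫⁻ y, ENNReal.ofReal (ψ y) ^ q ∂ν
        = ∫⁻ l in Set.Ioi (0:ℝ), ENNReal.ofReal (q*(q-1)*l^(q-2)) *
            ∫⁻ y, ENNReal.ofReal (ψ y - l) ∂ν ∂volume := (LC ν q hq ψ hψm hψ0).symm
      _ ≤ ∫⁻ l in Set.Ioi (0:ℝ), ENNReal.ofReal (q*(q-1)*l^(q-2)) *
            ∫⁻ x, ENNReal.ofReal (c * |f x| - l) ∂μ ∂volume := by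
          refine lintegral_mono_ae ?_
          filter_upwards [ae_restrict_mem measurableSet_Ioi] with l hl
          exact mul_le_mul_right (claim l hl) _
      _ = ∫⁻ x, ENNReal.ofReal (c * |f x|) ^ q ∂μ :=
          LC μ q hq (fun x => c * |f x|) (measurable_const.mul f.measurable.abs)
            (fun x => by positivity)
      _ = ∫⁻ x, C ^ q * (‖f x‖₊ : ℝ≥0∞) ^ q ∂μ := by
          refine lintegral_congr fun x => ?_
          rw [ENNReal.ofReal_mul hc0.le, ← Real.norm_eq_abs,
            ofReal_norm, enorm_eq_nnnorm, ← hCc,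
            ENNReal.mul_rpow_of_nonneg _ _ hq0.le]
      _ = C ^ q * ∫⁻ x, (‖f x‖₊ : ℝ≥0∞) ^ q ∂μ :=
          lintegral_const_mul _ ((f.measurable.nnnorm.coe_nnreal_ennreal).pow measurable_const)
  have hp0 : p ≠ 0 := (zero_lt_one.trans_le hp).ne'
  have main : ∫⁻ y, (‖T f y‖₊ : ℝ≥0∞) ^ q ∂ν ≤ C ^ q * ∫⁻ x, (‖f x‖₊ : ℝ≥0∞) ^ q ∂μ := by
    rw [lintegral_eq_nnreal (fun y => (‖T f y‖₊ : ℝ≥0∞) ^ q) ν]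
    refine iSup₂_le fun φ hφ => ?_
    rw [← SimpleFunc.lintegral_eq_lintegral]
    set ψ : Y → ℝ := fun y => ((φ y : ℝ)) ^ (1/q) with hψdef
    have hψm : Measurable ψ := (φ.measurable.coe_nnreal_real).pow measurable_const
    have hψ0 : ∀ y, 0 ≤ ψ y := fun y => Real.rpow_nonneg (φ y).coe_nonneg _
    have hψle : ∀ y, ψ y ≤ |T f y| := by
      intro y
      have h1 : ((φ y : ℝ≥0∞)) ≤ ENNReal.ofReal (|T f y| ^ q) := by
        have h := hφ y
        rwa [← enorm_eq_nnnorm, ← ofReal_norm, Real.norm_eq_abs,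
          ENNReal.ofReal_rpow_of_nonneg (abs_nonneg _) hq0.le] at h
      have h2 : (φ y : ℝ) ≤ |T f y| ^ q := by
        have h3 := ENNReal.toReal_mono ENNReal.ofReal_ne_top h1
        rwa [ENNReal.coe_toReal, ENNReal.toReal_ofReal (by positivity)] at h3
      calc ψ y = ((φ y : ℝ)) ^ (1/q) := rfl
        _ ≤ (|T f y| ^ q) ^ (1/q) := Real.rpow_le_rpow (φ y).coe_nonneg h2 (by positivity)
        _ = |T f y| := by rw [one_div, Real.rpow_rpow_inv (abs_nonneg _) hq0.ne']
    have hval : ∫⁻ y, (φ.map ENNReal.ofNNReal) y ∂ν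
        = ∫⁻ y, ENNReal.ofReal (ψ y) ^ q ∂ν := by
      refine lintegral_congr fun y => ?_
      rw [SimpleFunc.map_apply]
      show (φ y : ℝ≥0∞) = ENNReal.ofReal ((φ y : ℝ) ^ (1/q)) ^ q
      rw [ENNReal.ofReal_rpow_of_nonneg (Real.rpow_nonneg (φ y).coe_nonneg _) hq0.le, one_div,
        Real.rpow_inv_rpow (φ y).coe_nonneg hq0.ne', ENNReal.ofReal_coe_nnreal]
    rw [hval]
    exact key ψ hψm hψ0 hψle
  calc eLpNorm (T f) p ν
      = (∫⁻ y, (‖T f y‖₊ : ℝ≥0∞) ^ q ∂ν) ^ (1/q) :=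
        eLpNorm_eq_lintegral_rpow_enorm_toReal hp0 hptop
    _ ≤ (C ^ q * ∫⁻ x, (‖f x‖₊ : ℝ≥0∞) ^ q ∂μ) ^ (1/q) :=
        ENNReal.rpow_le_rpow main (by positivity)
    _ = C * (∫⁻ x, (‖f x‖₊ : ℝ≥0∞) ^ q ∂μ) ^ (1/q) := by
        rw [ENNReal.mul_rpow_of_nonneg _ _ (by positivity), ← ENNReal.rpow_mul,
          mul_one_div_cancel hq0.ne', ENNReal.rpow_one]
    _ = C * eLpNorm f p μ := by
        rw [eLpNorm_eq_lintegral_rpow_enorm_toReal hp0 hptop]; rfl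

end
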